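/- Let μ be a Borel probability measure on ℝ supported in [0,1] that is Rajchman, and suppose h : [1,∞) → (0,∞) is decreasing with h(t) → 0 and |μ̂(t)| ≤ h(t) for all t ≥ 1. If (tₙ) is a decreasing positive sequence with t_{n+1} ≤ tₙ/(2ⁿ Tₙ) where Tₙ ≥ max(2ⁿ, h⁻¹(2⁻ⁿ)), then sup_{s ∈ ℝ} Σ_{n=1}^∞ |λ̂₀(tₙ s) - μ̂(tₙ s)|² < ∞, where λ₀ is the uniform probability measure on [0,1]. -/

import Mathlib

open MeasureTheory Complex Real Set Filter

noncomputable def kern (u x : ℝ) : ℂ := Complex.exp (-2 * π * I * u * x)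

lemma exp_I_sub_one_le (θ : ℝ) : ‖Complex.exp (θ * I) - 1‖ ≤ |θ| := by
  rw [Complex.exp_mul_I, ← Complex.ofReal_cos, ← Complex.ofReal_sin]
  have h1 : Real.sin (θ/2) ^ 2 = 1/2 - Real.cos (2 * (θ/2)) / 2 := Real.sin_sq_eq_half_sub _
  have h2 : |Real.sin (θ/2)| ≤ |θ/2| := Real.abs_sin_le_abs
  have h3 : Real.sin (θ/2) ^ 2 ≤ (θ/2)^2 := by
    rw [← _root_.sq_abs, ← _root_.sq_abs (θ/2)]
    exact pow_le_pow_left₀ (abs_nonneg _) h2 2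
  have hc : 1 - Real.cos θ ≤ θ^2 / 2 := by
    have h4 : 2 * (θ/2) = θ := by ring
    rw [h4] at h1; nlinarith
  have hn : ‖(Real.cos θ : ℂ) + Real.sin θ * I - 1‖^2 = (Real.cos θ - 1)^2 + Real.sin θ ^ 2 := by
    rw [Complex.sq_norm, Complex.normSq_apply]
    simp only [Complex.add_re, Complex.sub_re, Complex.ofReal_re, Complex.mul_re, Complex.I_re,
      Complex.I_im, Complex.ofReal_im, Complex.one_re, Complex.add_im, Complex.sub_im,
      Complex.mul_im, Complex.one_im]
    ring
  have hb : ‖(Real.cos θ : ℂ) + Real.sin θ * I - 1‖^2 ≤ |θ|^2 := by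
    rw [hn, _root_.sq_abs]; nlinarith [Real.sin_sq_add_cos_sq θ]
  nlinarith [norm_nonneg ((Real.cos θ : ℂ) + Real.sin θ * I - 1), abs_nonneg θ]

lemma kern_eq (u x : ℝ) : kern u x = Complex.exp (((-2*π*u*x : ℝ) : ℂ) * I) := by
  unfold kern; congr 1; push_cast; ring

lemma norm_kern (u x : ℝ) : ‖kern u x‖ = 1 := by
  rw [kern_eq]; exact Complex.norm_exp_ofReal_mul_I _

lemma norm_kern_sub_one (u x : ℝ) : ‖kern u x - 1‖ ≤ 2 * π * |u| * |x| := by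
  rw [kern_eq]
  calc ‖Complex.exp (((-2*π*u*x : ℝ) : ℂ) * I) - 1‖ ≤ |(-2*π*u*x : ℝ)| := exp_I_sub_one_le _
    _ = 2 * π * |u| * |x| := by
        rw [abs_mul, abs_mul, abs_mul]
        simp [abs_of_pos Real.pi_pos]

lemma kern_integrable (ν : Measure ℝ) [IsFiniteMeasure ν] (u : ℝ) :
    Integrable (fun x => kern u x) ν := by
  have hc : Continuous fun x : ℝ => kern u x := by
    unfold kern; fun_prop
  refine (integrable_const (1:ℝ)).mono' hc.aestronglyMeasurable ?_
  filter_upwards with x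
  rw [norm_kern]

lemma norm_M_le_one (μ : Measure ℝ) [IsProbabilityMeasure μ] (u : ℝ) :
    ‖∫ x, kern u x ∂μ‖ ≤ 1 := by
  calc ‖∫ x, kern u x ∂μ‖ ≤ ∫ x, ‖kern u x‖ ∂μ := norm_integral_le_integral_norm _
    _ = 1 := by simp only [norm_kern]; simp

lemma norm_L_le_one (u : ℝ) : ‖∫ x in Icc (0:ℝ) 1, kern u x‖ ≤ 1 := by
  calc ‖∫ x in Icc (0:ℝ) 1, kern u x‖ ≤ ∫ x in Icc (0:ℝ) 1, ‖kern u x‖ :=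
      norm_integral_le_integral_norm _
    _ = 1 := by simp only [norm_kern]; simp [Real.volume_Icc]

instance : IsProbabilityMeasure (volume.restrict (Icc (0:ℝ) 1)) := by
  constructor
  simp [Real.volume_Icc]

lemma M_sub_one (μ : Measure ℝ) [IsProbabilityMeasure μ] (hsupp : μ (Icc (0:ℝ) 1)ᶜ = 0)
    (u : ℝ) : ‖(∫ x, kern u x ∂μ) - 1‖ ≤ 2 * π * |u| := by
  have h1 : (∫ x, kern u x ∂μ) - 1 = ∫ x, (kern u x - 1) ∂μ := by
    rw [integral_sub (kern_integrable μ u) (integrable_const 1)]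
    simp
  rw [h1]
  have hae : ∀ᵐ x ∂μ, x ∈ Icc (0:ℝ) 1 := by
    rw [ae_iff]
    exact hsupp
  have := norm_integral_le_of_norm_le_const (μ := μ) (C := 2 * π * |u|)
    (f := fun x => kern u x - 1) ?_
  · simpa using this
  · filter_upwards [hae] with x hx
    calc ‖kern u x - 1‖ ≤ 2 * π * |u| * |x| := norm_kern_sub_one u x
      _ ≤ 2 * π * |u| * 1 := by
          have : |x| ≤ 1 := abs_le.2 ⟨by linarith [hx.1], hx.2⟩
          have h0 : (0:ℝ) ≤ 2 * π * |u| := by positivity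
          nlinarith
      _ = 2 * π * |u| := by ring

lemma L_sub_one (u : ℝ) : ‖(∫ x in Icc (0:ℝ) 1, kern u x) - 1‖ ≤ 2 * π * |u| :=
  M_sub_one (volume.restrict (Icc (0:ℝ) 1))
    (by rw [Measure.restrict_apply' measurableSet_Icc]; simp) u

lemma L_decay (u : ℝ) (hu : 0 < u) : ‖∫ x in Icc (0:ℝ) 1, kern u x‖ ≤ 2 / u := by
  have hc : (-2*(π:ℂ)*I*(u:ℂ)) ≠ 0 := by
    simp [Real.pi_ne_zero, Complex.I_ne_zero, hu.ne', sub_eq_zero]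
  have h1 : ∫ x in Icc (0:ℝ) 1, kern u x = ∫ x in (0:ℝ)..1, Complex.exp ((-2*(π:ℂ)*I*(u:ℂ)) * x) := by
    rw [intervalIntegral.integral_of_le zero_le_one, ← MeasureTheory.integral_Icc_eq_integral_Ioc]
    rfl
  rw [h1, integral_exp_mul_complex hc]
  rw [norm_div]
  have hnum : ‖Complex.exp (-2*(π:ℂ)*I*(u:ℂ) * 1) - Complex.exp (-2*(π:ℂ)*I*(u:ℂ) * 0)‖ ≤ 2 := by
    have e1 : Complex.exp (-2*(π:ℂ)*I*(u:ℂ) * 1) = kern u 1 := by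
      unfold kern; push_cast; ring_nf
    have e0 : Complex.exp (-2*(π:ℂ)*I*(u:ℂ) * 0) = 1 := by
      rw [mul_zero, Complex.exp_zero]
    rw [e1, e0]
    calc ‖kern u 1 - 1‖ ≤ ‖kern u 1‖ + ‖(1:ℂ)‖ := norm_sub_le _ _
      _ ≤ 2 := by rw [norm_kern]; norm_num
  have hden : ‖(-2*(π:ℂ)*I*(u:ℂ))‖ = 2*π*u := by
    simp [norm_mul, Complex.norm_I, Complex.norm_real, abs_of_pos hu, abs_of_pos Real.pi_pos]
  rw [hden]
  have hpu : 0 < 2*π*u := by positivity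
  calc ‖Complex.exp (-2*(π:ℂ)*I*(u:ℂ) * 1) - Complex.exp (-2*(π:ℂ)*I*(u:ℂ) * 0)‖ / (2*π*u)
      ≤ 2 / (2*π*u) := by gcongr
    _ ≤ 2 / u := by
        gcongr
        nlinarith [Real.pi_gt_three]

lemma kern_neg (u x : ℝ) : kern (-u) x = starRingEnd ℂ (kern u x) := by
  unfold kern
  rw [← Complex.exp_conj]
  congr 1
  simp only [map_mul, map_neg, Complex.conj_I, Complex.conj_ofReal, map_ofNat]
  push_cast
  ring

lemma diff_neg (μ : Measure ℝ) [IsProbabilityMeasure μ] (u : ℝ) :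
    ‖(∫ x in Icc (0:ℝ) 1, kern (-u) x) - ∫ x, kern (-u) x ∂μ‖ =
      ‖(∫ x in Icc (0:ℝ) 1, kern u x) - ∫ x, kern u x ∂μ‖ := by
  have h1 : ∫ x in Icc (0:ℝ) 1, kern (-u) x = starRingEnd ℂ (∫ x in Icc (0:ℝ) 1, kern u x) := by
    rw [← integral_conj]
    exact integral_congr_ae (Filter.Eventually.of_forall fun x => kern_neg u x)
  have h2 : ∫ x, kern (-u) x ∂μ = starRingEnd ℂ (∫ x, kern u x ∂μ) := by
    rw [← integral_conj]
    exact integral_congr_ae (Filter.Eventually.of_forall fun x => kern_neg u x)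
  rw [h1, h2, ← map_sub]
  exact RCLike.norm_conj _

theorem explicit_rate_square_bound
    (μ : Measure ℝ) [IsProbabilityMeasure μ]
    (hsupp : μ (Icc (0:ℝ) 1)ᶜ = 0)
    (hRajchman : Tendsto (fun s : ℝ =>
        ∫ x : ℝ, Complex.exp (-2 * π * I * s * x) ∂μ) (cocompact ℝ) (nhds 0))
    (h : ℝ → ℝ) (hh_pos : ∀ u : ℝ, 1 ≤ u → 0 < h u)
    (hh_anti : ∀ u v : ℝ, 1 ≤ u → u ≤ v → h v ≤ h u)
    (hh_lim : Tendsto h atTop (nhds 0))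
    (hμh : ∀ u : ℝ, 1 ≤ u →
      ‖∫ x : ℝ, Complex.exp (-2 * π * I * u * x) ∂μ‖ ≤ h u)
    (t : ℕ → ℝ) (ht_pos : ∀ n, 0 < t n) (ht_dec : ∀ n, t (n + 1) ≤ t n)
    (T : ℕ → ℝ)
    (hT : ∀ n, (2:ℝ) ^ n ≤ T n ∧ h (T n) ≤ (2:ℝ)⁻¹ ^ n)
    (ht_rate : ∀ n, t (n + 1) ≤ t n / ((2:ℝ) ^ n * T n)) :
    ∃ C : ℝ, ∀ s : ℝ,
      (∑' n : ℕ,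
        ‖(∫ x : ℝ in Icc (0:ℝ) 1, Complex.exp (-2 * π * I * (t n * s) * x)) -
          (∫ x : ℝ, Complex.exp (-2 * π * I * (t n * s) * x) ∂μ)‖ ^ 2) ≤ C := by
  classical
  set K : ℝ := 16 * π ^ 2 + 9 with hK
  have hKpos : 0 < K := by positivity
  refine ⟨K * (4/3) + 8, ?_⟩
  intro s
  set D : ℝ → ℝ := fun u => ‖(∫ x in Icc (0:ℝ) 1, kern u x) - ∫ x, kern u x ∂μ‖ with hD
  set r : ℝ := |s| with hr
  have hr0 : 0 ≤ r := abs_nonneg s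
  -- rewrite summand
  have hterm : ∀ n : ℕ,
      ‖(∫ x : ℝ in Icc (0:ℝ) 1, Complex.exp (-2 * π * I * (t n * s) * x)) -
        (∫ x : ℝ, Complex.exp (-2 * π * I * (t n * s) * x) ∂μ)‖ ^ 2 = D (t n * r) ^ 2 := by
    intro n
    have h1 : ∀ u : ℝ,
        ‖(∫ x : ℝ in Icc (0:ℝ) 1, Complex.exp (-2 * π * I * (u : ℝ) * x)) -
          (∫ x : ℝ, Complex.exp (-2 * π * I * (u : ℝ) * x) ∂μ)‖ = D u := fun u => rfl
    simp only [← Complex.ofReal_mul]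
    rcases le_or_gt 0 s with hs | hs
    · have heq : t n * s = t n * r := by rw [hr, _root_.abs_of_nonneg hs]
      rw [heq, h1 (t n * r)]
    · have hts : t n * s = -(t n * r) := by rw [hr, _root_.abs_of_neg hs]; ring
      rw [hts, h1 (-(t n * r)), hD]
      simp only
      rw [diff_neg μ (t n * r)]
  rw [tsum_congr hterm]
  -- basic bounds
  have hDle2 : ∀ u : ℝ, D u ≤ 2 := by
    intro u
    calc D u ≤ ‖∫ x in Icc (0:ℝ) 1, kern u x‖ + ‖∫ x, kern u x ∂μ‖ := norm_sub_le _ _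
      _ ≤ 1 + 1 := add_le_add (norm_L_le_one u) (norm_M_le_one μ u)
      _ = 2 := by norm_num
  have hpow2 : ∀ n : ℕ, ((2:ℝ)⁻¹ ^ n) ^ 2 = (4:ℝ)⁻¹ ^ n := by
    intro n
    rw [← pow_mul, mul_comm, pow_mul]
    norm_num
  have hDnonneg : ∀ u : ℝ, 0 ≤ D u := fun u => norm_nonneg _
  -- small case
  have hsm : ∀ n : ℕ, t n * r ≤ (2:ℝ)⁻¹ ^ n → D (t n * r) ^ 2 ≤ K * (4:ℝ)⁻¹ ^ n := by
    intro n hn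
    have h0 : 0 ≤ t n * r := mul_nonneg (ht_pos n).le hr0
    have hd : D (t n * r) ≤ 4 * π * ((2:ℝ)⁻¹ ^ n) := by
      have e1 : (∫ x in Icc (0:ℝ) 1, kern (t n * r) x) - ∫ x, kern (t n * r) x ∂μ =
          ((∫ x in Icc (0:ℝ) 1, kern (t n * r) x) - 1) - ((∫ x, kern (t n * r) x ∂μ) - 1) := by
        ring
      calc D (t n * r) = ‖((∫ x in Icc (0:ℝ) 1, kern (t n * r) x) - 1) -
            ((∫ x, kern (t n * r) x ∂μ) - 1)‖ := by rw [hD]; simp only; rw [e1]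
        _ ≤ ‖(∫ x in Icc (0:ℝ) 1, kern (t n * r) x) - 1‖ +
            ‖(∫ x, kern (t n * r) x ∂μ) - 1‖ := norm_sub_le _ _
        _ ≤ 2 * π * |t n * r| + 2 * π * |t n * r| :=
            add_le_add (L_sub_one _) (M_sub_one μ hsupp _)
        _ = 4 * π * (t n * r) := by rw [_root_.abs_of_nonneg h0]; ring
        _ ≤ 4 * π * ((2:ℝ)⁻¹ ^ n) := by
            have : (0:ℝ) ≤ 4 * π := by positivity
            nlinarith
    calc D (t n * r) ^ 2 ≤ (4 * π * ((2:ℝ)⁻¹ ^ n)) ^ 2 :=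
        pow_le_pow_left₀ (hDnonneg _) hd 2
      _ = 16 * π ^ 2 * ((2:ℝ)⁻¹ ^ n) ^ 2 := by ring
      _ = 16 * π ^ 2 * (4:ℝ)⁻¹ ^ n := by rw [hpow2]
      _ ≤ K * (4:ℝ)⁻¹ ^ n := by
          have : (0:ℝ) ≤ (4:ℝ)⁻¹ ^ n := by positivity
          nlinarith
  -- large case
  have hlg : ∀ n : ℕ, T n ≤ t n * r → D (t n * r) ^ 2 ≤ K * (4:ℝ)⁻¹ ^ n := by
    intro n hn
    have h2n : (1:ℝ) ≤ 2 ^ n := one_le_pow₀ one_le_two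
    have hTn1 : (1:ℝ) ≤ T n := le_trans h2n (hT n).1
    have htr1 : (1:ℝ) ≤ t n * r := le_trans hTn1 hn
    have htrpos : (0:ℝ) < t n * r := lt_of_lt_of_le one_pos htr1
    have hLd : ‖∫ x in Icc (0:ℝ) 1, kern (t n * r) x‖ ≤ 2 * (2:ℝ)⁻¹ ^ n := by
      calc ‖∫ x in Icc (0:ℝ) 1, kern (t n * r) x‖ ≤ 2 / (t n * r) := L_decay _ htrpos
        _ ≤ 2 / (2:ℝ) ^ n := by
            gcongr
            exact le_trans (hT n).1 hn
        _ = 2 * (2:ℝ)⁻¹ ^ n := by rw [inv_pow]; ring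
    have hMd : ‖∫ x, kern (t n * r) x ∂μ‖ ≤ (2:ℝ)⁻¹ ^ n := by
      have h1 : ‖∫ x, kern (t n * r) x ∂μ‖ ≤ h (t n * r) := hμh _ htr1
      have h2 : h (t n * r) ≤ h (T n) := hh_anti (T n) (t n * r) hTn1 hn
      exact le_trans h1 (le_trans h2 (hT n).2)
    have hd : D (t n * r) ≤ 3 * (2:ℝ)⁻¹ ^ n := by
      calc D (t n * r) ≤ ‖∫ x in Icc (0:ℝ) 1, kern (t n * r) x‖ +
          ‖∫ x, kern (t n * r) x ∂μ‖ := norm_sub_le _ _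
        _ ≤ 2 * (2:ℝ)⁻¹ ^ n + (2:ℝ)⁻¹ ^ n := add_le_add hLd hMd
        _ = 3 * (2:ℝ)⁻¹ ^ n := by ring
    calc D (t n * r) ^ 2 ≤ (3 * (2:ℝ)⁻¹ ^ n) ^ 2 := pow_le_pow_left₀ (hDnonneg _) hd 2
      _ = 9 * ((2:ℝ)⁻¹ ^ n) ^ 2 := by ring
      _ = 9 * (4:ℝ)⁻¹ ^ n := by rw [hpow2]
      _ ≤ K * (4:ℝ)⁻¹ ^ n := by
          have h4 : (0:ℝ) ≤ (4:ℝ)⁻¹ ^ n := by positivity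
          have : (9:ℝ) ≤ K := by rw [hK]; nlinarith [sq_nonneg π]
          nlinarith
  -- step lemma
  have hstep : ∀ m : ℕ, 1 ≤ m → t m * r ≤ (2:ℝ)⁻¹ ^ m → t (m+1) * r ≤ (2:ℝ)⁻¹ ^ (m+1) := by
    intro m hm hsm'
    have hTm : (2:ℝ) ^ m ≤ T m := (hT m).1
    have h2m : (2:ℝ) ≤ 2 ^ m := by
      calc (2:ℝ) = 2 ^ 1 := (pow_one 2).symm
        _ ≤ 2 ^ m := pow_le_pow_right₀ one_le_two hm
    have hTmpos : (0:ℝ) < T m := lt_of_lt_of_le (pow_pos two_pos m) hTm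
    have hdenom : (2:ℝ) ≤ 2 ^ m * T m := by nlinarith [pow_pos (two_pos (α := ℝ)) m]
    have h1 : t (m+1) * r ≤ (t m * r) / (2 ^ m * T m) := by
      have := mul_le_mul_of_nonneg_right (ht_rate m) hr0
      calc t (m+1) * r ≤ t m / (2 ^ m * T m) * r := this
        _ = (t m * r) / (2 ^ m * T m) := by ring
    have h2 : (t m * r) / (2 ^ m * T m) ≤ ((2:ℝ)⁻¹ ^ m) / 2 := by
      apply div_le_div₀ (by positivity) hsm' two_pos hdenom
    calc t (m+1) * r ≤ ((2:ℝ)⁻¹ ^ m) / 2 := le_trans h1 h2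
      _ = (2:ℝ)⁻¹ ^ (m+1) := by rw [pow_succ]; ring
  have hgeo : Summable (fun n : ℕ => K * (4:ℝ)⁻¹ ^ n) :=
    (summable_geometric_of_lt_one (by norm_num) (by norm_num)).mul_left K
  have hgeosum : ∑' n : ℕ, K * (4:ℝ)⁻¹ ^ n = K * (4/3) := by
    rw [tsum_mul_left, tsum_geometric_of_lt_one (by norm_num) (by norm_num)]
    norm_num
  by_cases hB : ∃ n : ℕ, (2:ℝ)⁻¹ ^ n < t n * r ∧ t n * r < T n
  · set n₀ := Nat.find hB with hn₀
    have hbad : (2:ℝ)⁻¹ ^ n₀ < t n₀ * r ∧ t n₀ * r < T n₀ := Nat.find_spec hB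
    set e : ℕ → ℝ := fun n => if n = n₀ ∨ n = n₀ + 1 then (4:ℝ) else 0 with he
    have base : t (n₀ + 2) * r ≤ (2:ℝ)⁻¹ ^ (n₀ + 2) := by
      have hTpos : (0:ℝ) < T n₀ := lt_of_lt_of_le (pow_pos two_pos n₀) (hT n₀).1
      have b1 : t (n₀ + 1) * r ≤ (2:ℝ)⁻¹ ^ n₀ := by
        have h1 : t (n₀+1) * r ≤ (t n₀ * r) / (2 ^ n₀ * T n₀) := by
          have := mul_le_mul_of_nonneg_right (ht_rate n₀) hr0
          calc t (n₀+1) * r ≤ t n₀ / (2 ^ n₀ * T n₀) * r := this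
            _ = (t n₀ * r) / (2 ^ n₀ * T n₀) := by ring
        have h2 : (t n₀ * r) / (2 ^ n₀ * T n₀) ≤ T n₀ / (2 ^ n₀ * T n₀) := by
          gcongr
          exact hbad.2.le
        have h3 : T n₀ / ((2:ℝ) ^ n₀ * T n₀) = (2:ℝ)⁻¹ ^ n₀ := by
          rw [mul_comm, ← div_div, div_self hTpos.ne', one_div, inv_pow]
        linarith
      have hT1pos : (0:ℝ) < T (n₀+1) := lt_of_lt_of_le (pow_pos two_pos _) (hT (n₀+1)).1
      have h2m : (2:ℝ) ≤ 2 ^ (n₀+1) := by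
        calc (2:ℝ) = 2 ^ 1 := (pow_one 2).symm
          _ ≤ 2 ^ (n₀+1) := pow_le_pow_right₀ one_le_two (by omega)
      have hdenom : (4:ℝ) ≤ 2 ^ (n₀+1) * T (n₀+1) := by
        have hT2 : (2:ℝ) ≤ T (n₀+1) := le_trans h2m (hT (n₀+1)).1
        nlinarith
      have h1 : t (n₀+2) * r ≤ (t (n₀+1) * r) / (2 ^ (n₀+1) * T (n₀+1)) := by
        have := mul_le_mul_of_nonneg_right (ht_rate (n₀+1)) hr0
        calc t (n₀+2) * r ≤ t (n₀+1) / (2 ^ (n₀+1) * T (n₀+1)) * r := this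
          _ = (t (n₀+1) * r) / (2 ^ (n₀+1) * T (n₀+1)) := by ring
      have h2 : (t (n₀+1) * r) / (2 ^ (n₀+1) * T (n₀+1)) ≤ ((2:ℝ)⁻¹ ^ n₀) / 4 :=
        div_le_div₀ (by positivity) b1 (by norm_num) hdenom
      calc t (n₀+2) * r ≤ ((2:ℝ)⁻¹ ^ n₀) / 4 := le_trans h1 h2
        _ = (2:ℝ)⁻¹ ^ (n₀+2) := by rw [pow_succ, pow_succ]; ring
    have claim : ∀ n, n₀ + 2 ≤ n → t n * r ≤ (2:ℝ)⁻¹ ^ n := by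
      intro n hn
      induction n, hn using Nat.le_induction with
      | base => exact base
      | succ m hm ih => exact hstep m (by omega) ih
    have hbound : ∀ n, D (t n * r) ^ 2 ≤ K * (4:ℝ)⁻¹ ^ n + e n := by
      intro n
      by_cases hne : n = n₀ ∨ n = n₀ + 1
      · have he4 : e n = 4 := by simp only [he]; rw [if_pos hne]
        rw [he4]
        have h4 : D (t n * r) ^ 2 ≤ 4 := by
          nlinarith [hDle2 (t n * r), hDnonneg (t n * r)]
        have h0 : (0:ℝ) ≤ K * (4:ℝ)⁻¹ ^ n := by positivity
        linarith
      · have he0 : e n = 0 := by simp only [he]; rw [if_neg hne]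
        rw [he0, add_zero]
        push_neg at hne
        rcases lt_or_ge n n₀ with hlt | hge
        · have hnb := Nat.find_min hB hlt
          rw [not_and_or] at hnb
          rcases hnb with h1 | h2
          · exact hsm n (not_lt.1 h1)
          · exact hlg n (not_lt.1 h2)
        · have hge2 : n₀ + 2 ≤ n := by omega
          exact hsm n (claim n hge2)
    have hesupp : ∀ n ∉ ({n₀, n₀ + 1} : Finset ℕ), e n = 0 := by
      intro n hn
      simp only [Finset.mem_insert, Finset.mem_singleton] at hn
      push_neg at hn
      simp only [he]
      rw [if_neg (by tauto)]
    have hesum : Summable e := summable_of_ne_finset_zero hesupp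
    have hetsum : ∑' n, e n = 8 := by
      rw [tsum_eq_sum hesupp, Finset.sum_pair (by omega : n₀ ≠ n₀ + 1)]
      simp only [he]
      norm_num
    have hgsum : Summable (fun n => K * (4:ℝ)⁻¹ ^ n + e n) := hgeo.add hesum
    have hsummand : Summable (fun n => D (t n * r) ^ 2) :=
      Summable.of_nonneg_of_le (fun n => sq_nonneg _) hbound hgsum
    calc ∑' n, D (t n * r) ^ 2 ≤ ∑' n, (K * (4:ℝ)⁻¹ ^ n + e n) :=
        Summable.tsum_le_tsum hbound hsummand hgsum
      _ = K * (4/3) + 8 := by rw [Summable.tsum_add hgeo hesum, hgeosum, hetsum]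
  · push_neg at hB
    have hbound : ∀ n, D (t n * r) ^ 2 ≤ K * (4:ℝ)⁻¹ ^ n := by
      intro n
      rcases le_or_gt (t n * r) ((2:ℝ)⁻¹ ^ n) with h1 | h1
      · exact hsm n h1
      · exact hlg n (hB n h1)
    have hsummand : Summable (fun n => D (t n * r) ^ 2) :=
      Summable.of_nonneg_of_le (fun n => sq_nonneg _) hbound hgeo
    calc ∑' n, D (t n * r) ^ 2 ≤ ∑' n, K * (4:ℝ)⁻¹ ^ n :=
        Summable.tsum_le_tsum hbound hsummand hgeo
      _ = K * (4/3) := hgeosum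
      _ ≤ K * (4/3) + 8 := by linarith
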